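/- In the Chevalley–Eilenberg algebra of the Bigalke–Rollenske nilmanifold X^{4n−2} (n ≥ 2), splitting d = ∂ + ∂̄ by bidegree, the real positive (4n−3,4n−3)-form ψ := φ¹∧φ̄¹∧⋯∧φ^{4n−3}∧φ̄^{4n−3} is ∂∂̄-exact: ψ = ∂∂̄( φ¹∧φ̄¹∧⋯∧(omit φ^{n−1}∧φ̄^{n−1})∧⋯∧(omit φ^{2n−1}∧φ̄^{2n−1})∧⋯∧φ^{4n−2}∧φ̄^{4n−2} ). -/

import Mathlib

noncomputable section

abbrev Vsp : Type := (ℕ ⊕ ℕ) →₀ ℂ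
abbrev ExtA : Type := ExteriorAlgebra ℂ Vsp

def φ (j : ℕ) : ExtA := ExteriorAlgebra.ι ℂ (Finsupp.single (Sum.inl j) 1)
def φb (j : ℕ) : ExtA := ExteriorAlgebra.ι ℂ (Finsupp.single (Sum.inr j) 1)

/-- the list [1, …, m] -/
def idx (m : ℕ) : List ℕ := (List.range m).map (· + 1)

namespace BRaux
open ExteriorAlgebra

def gen (s : ℕ ⊕ ℕ) : ExtA := ExteriorAlgebra.ι ℂ (Finsupp.single s 1)

lemma phi_eq (j : ℕ) : φ j = gen (Sum.inl j) := rfl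
lemma phib_eq (j : ℕ) : φb j = gen (Sum.inr j) := rfl

lemma iota_anticomm (v w : Vsp) : ι ℂ v * ι ℂ w = -(ι ℂ w * ι ℂ v) := by
  have h := ι_sq_zero (R := ℂ) (v + w)
  rw [map_add, add_mul, mul_add, mul_add, ι_sq_zero, ι_sq_zero, zero_add, add_zero] at h
  exact eq_neg_of_add_eq_zero_left h

lemma gen_anticomm (s t : ℕ ⊕ ℕ) : gen s * gen t = -(gen t * gen s) :=
  iota_anticomm _ _

lemma gen_sq' (s : ℕ ⊕ ℕ) : gen s * gen s = 0 := ι_sq_zero _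

lemma gen_swap (s t : ℕ ⊕ ℕ) (x : ExtA) :
    gen s * (gen t * x) = -(gen t * (gen s * x)) := by
  rw [← mul_assoc, ← mul_assoc, gen_anticomm, neg_mul]

lemma gen_sq (s : ℕ ⊕ ℕ) (x : ExtA) : gen s * (gen s * x) = 0 := by
  rw [← mul_assoc, gen_sq', zero_mul]

/-- products of two ι's are central -/
lemma pair_central (v w : Vsp) (x : ExtA) :
    (ι ℂ v * ι ℂ w) * x = x * (ι ℂ v * ι ℂ w) := by
  induction x using ExteriorAlgebra.induction with
  | algebraMap r => rw [Algebra.commutes]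
  | ι u =>
      rw [mul_assoc, iota_anticomm w u, mul_neg, ← mul_assoc, iota_anticomm v u,
        neg_mul, neg_neg, mul_assoc]
  | mul a b ha hb => rw [← mul_assoc, ha, mul_assoc, hb, ← mul_assoc]
  | add a b ha hb => rw [mul_add, add_mul, ha, hb]

def G (l : List (ℕ ⊕ ℕ)) : ExtA := (l.map gen).prod

lemma G_nil : G [] = 1 := rfl

lemma G_cons (s : ℕ ⊕ ℕ) (l : List (ℕ ⊕ ℕ)) : gen s * G l = G (s :: l) := rfl

lemma gen_mul_G_of_mem {s : ℕ ⊕ ℕ} {l : List (ℕ ⊕ ℕ)} (h : s ∈ l) :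
    gen s * G l = 0 := by
  induction l with
  | nil => simp at h
  | cons t l ih =>
      rw [← G_cons]
      rcases List.mem_cons.mp h with h | h
      · subst h; exact gen_sq _ _
      · rw [gen_swap, ih h, mul_zero, neg_zero]

lemma G_eq_zero {l : List (ℕ ⊕ ℕ)} (h : ¬ l.Nodup) : G l = 0 := by
  classical
  induction l with
  | nil => simp at h
  | cons t l ih =>
      rw [List.nodup_cons] at h
      push_neg at h
      rw [← G_cons]
      rcases Classical.em (t ∈ l) with ht | ht
      · exact gen_mul_G_of_mem ht
      · rw [ih (h ht), mul_zero]

def τ (j : ℕ) : ExtA := φ j * φb j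

def P (L : List ℕ) : ExtA := (L.map τ).prod

lemma P_nil : P [] = 1 := rfl
lemma P_cons (j : ℕ) (L : List ℕ) : P (j :: L) = τ j * P L := by
  simp [P]

lemma tau_central (j : ℕ) (x : ExtA) : τ j * x = x * τ j :=
  pair_central _ _ x

lemma P_central (L : List ℕ) (x : ExtA) : P L * x = x * P L := by
  induction L with
  | nil => simp [P_nil]
  | cons j L ih =>
      rw [P_cons, mul_assoc, ih, ← mul_assoc, tau_central, mul_assoc]

def gl (L : List ℕ) : List (ℕ ⊕ ℕ) := L.flatMap fun j => [Sum.inl j, Sum.inr j]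

lemma P_eq_G (L : List ℕ) : P L = G (gl L) := by
  induction L with
  | nil => rfl
  | cons j L ih =>
      rw [P_cons, ih]
      show τ j * G (gl L) = G (Sum.inl j :: Sum.inr j :: gl L)
      rw [← G_cons, ← G_cons, τ, phi_eq, phib_eq, mul_assoc]

lemma inl_mem_gl {k : ℕ} {L : List ℕ} : Sum.inl k ∈ gl L ↔ k ∈ L := by
  simp [gl]

lemma inr_mem_gl {k : ℕ} {L : List ℕ} : Sum.inr k ∈ gl L ↔ k ∈ L := by
  simp [gl]

lemma mem_idx {j m : ℕ} : j ∈ idx m ↔ 1 ≤ j ∧ j ≤ m := by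
  simp only [idx, List.mem_map, List.mem_range]
  constructor
  · rintro ⟨a, ha, rfl⟩; omega
  · rintro ⟨h1, h2⟩; exact ⟨j - 1, by omega, by omega⟩

lemma nodup_idx (m : ℕ) : (idx m).Nodup :=
  List.nodup_range.map (fun a b => by omega)

section deriv

variable (D : ExtA →ₗ[ℂ] ExtA)
  (HD : ∀ (v : Vsp) (y : ExtA), D (ι ℂ v * y) = D (ι ℂ v) * y - ι ℂ v * D y)

def dtau (j : ℕ) : ExtA := D (φ j) * φb j - φ j * D (φb j)

include HD in
lemma D_tau_mul (j : ℕ) (y : ExtA) :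
    D (τ j * y) = dtau D j * y + τ j * D y := by
  have h1 : τ j * y = ι ℂ (Finsupp.single (Sum.inl j) 1) *
      (ι ℂ (Finsupp.single (Sum.inr j) 1) * y) := by
    rw [τ, phi_eq, phib_eq, mul_assoc]; rfl
  rw [h1, HD, HD]
  show _ = (D (φ j) * φb j - φ j * D (φb j)) * y + φ j * φb j * D y
  simp only [φ, φb]
  noncomm_ring

include HD in
lemma D_P_mul : ∀ (L : List ℕ), L.Nodup → ∀ (y : ExtA),
    D (P L * y) = (∑ j ∈ L.toFinset, dtau D j * (P (L.erase j) * y)) + P L * D y := by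
  intro L
  induction L with
  | nil => intro _ y; simp [P_nil]
  | cons j L ih =>
      intro hnd y
      rw [List.nodup_cons] at hnd
      have hsum : τ j * (∑ k ∈ L.toFinset, dtau D k * (P (L.erase k) * y))
          = ∑ k ∈ L.toFinset, dtau D k * (P ((j :: L).erase k) * y) := by
        rw [Finset.mul_sum]
        refine Finset.sum_congr rfl ?_
        intro k hk
        have hkj : j ≠ k := by
          rintro rfl; exact hnd.1 (List.mem_toFinset.mp hk)
        rw [List.erase_cons_tail (by simpa using hkj), P_cons, mul_assoc,
          tau_central, mul_assoc, ← tau_central]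
      rw [P_cons, mul_assoc, D_tau_mul D HD, ih hnd.2 y, List.toFinset_cons,
        Finset.sum_insert (by simpa using hnd.1), List.erase_cons_head, mul_add, hsum,
        show τ j * (P L * D y) = P (j :: L) * D y from by rw [← mul_assoc, ← P_cons]]
      abel

include HD in
lemma iota_mul_D_one (v : Vsp) : ι ℂ v * D 1 = 0 := by
  have h := HD v 1
  rw [mul_one, mul_one] at h
  exact sub_eq_self.mp h.symm

include HD in
lemma P_mul_D_one : ∀ (L : List ℕ), L ≠ [] → P L * D 1 = 0 := by
  intro L
  induction L with
  | nil => intro h; exact absurd rfl h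
  | cons j L ih =>
      intro _
      rw [P_cons, mul_assoc]
      rcases L with _ | ⟨k, L⟩
      · rw [P_nil, one_mul, τ, mul_assoc,
          show φb j * D 1 = 0 from iota_mul_D_one D HD _, mul_zero]
      · rw [ih (by simp), mul_zero]

end deriv


lemma G3_zero₁ {a b c : ℕ ⊕ ℕ} {l : List (ℕ ⊕ ℕ)} (h : c ∈ l) :
    gen a * (gen b * (gen c * G l)) = 0 := by
  rw [gen_mul_G_of_mem h, mul_zero, mul_zero]

lemma G3_zero₂ {a b c : ℕ ⊕ ℕ} {l : List (ℕ ⊕ ℕ)} (h : b ∈ c :: l) :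
    gen a * (gen b * (gen c * G l)) = 0 := by
  rw [G_cons, gen_mul_G_of_mem h, mul_zero]

lemma G3_zero₃ {a b c : ℕ ⊕ ℕ} {l : List (ℕ ⊕ ℕ)} (h : a ∈ b :: c :: l) :
    gen a * (gen b * (gen c * G l)) = 0 := by
  rw [G_cons, G_cons, gen_mul_G_of_mem h]

lemma P_perm {M M' : List ℕ} (h : M.Perm M') : P M = P M' := by
  refine List.Perm.prod_eq' (h.map τ) ?_
  refine List.pairwise_of_forall_mem_list ?_
  intro a ha b hb
  obtain ⟨i, -, rfl⟩ := List.mem_map.mp ha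
  exact tau_central i b

end BRaux



set_option maxHeartbeats 2000000 in
open BRaux in
theorem stmt_12 (n : ℕ) (hn : 2 ≤ n) (del delbar : ExtA →ₗ[ℂ] ExtA)
    (hleib : ∀ (v : Vsp) (y : ExtA),
      del (ExteriorAlgebra.ι ℂ v * y)
        = del (ExteriorAlgebra.ι ℂ v) * y - ExteriorAlgebra.ι ℂ v * del y)
    (hleibb : ∀ (v : Vsp) (y : ExtA),
      delbar (ExteriorAlgebra.ι ℂ v * y)
        = delbar (ExteriorAlgebra.ι ℂ v) * y - ExteriorAlgebra.ι ℂ v * delbar y)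
    (hsq : ∀ x, del (del x) = 0) (hsqb : ∀ x, delbar (delbar x) = 0)
    (hanti : ∀ x, del (delbar x) + delbar (del x) = 0)
    (hdel0 : ∀ j, 1 ≤ j → j ≤ 3 * n - 1 → del (φ j) = 0)
    (hdel : ∀ j, 3 * n ≤ j → j ≤ 4 * n - 2 →
      del (φ j) = φ (j - 3 * n + 1) * φ (j - 2 * n + 1))
    (hdelbar0 : ∀ j, 1 ≤ j → j < 3 * n - 1 → delbar (φ j) = 0)
    (hdelbar1 : delbar (φ (3 * n - 1)) = φ (2 * n) * φb n)
    (hdelbar : ∀ j, 3 * n ≤ j → j ≤ 4 * n - 2 →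
      delbar (φ j) = φ (j - 2 * n) * φb (j - n))
    (hdelb0 : ∀ j, 1 ≤ j → j < 3 * n - 1 → del (φb j) = 0)
    (hdelb1 : del (φb (3 * n - 1)) = φb (2 * n) * φ n)
    (hdelb : ∀ j, 3 * n ≤ j → j ≤ 4 * n - 2 →
      del (φb j) = φb (j - 2 * n) * φ (j - n))
    (hdelbarb0 : ∀ j, 1 ≤ j → j ≤ 3 * n - 1 → delbar (φb j) = 0)
    (hdelbarb : ∀ j, 3 * n ≤ j → j ≤ 4 * n - 2 →
      delbar (φb j) = φb (j - 3 * n + 1) * φb (j - 2 * n + 1)) :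
    ((idx (4 * n - 3)).map (fun j => φ j * φb j)).prod
      = del (delbar
          ((((idx (4 * n - 2)).filter (fun j => j ≠ n - 1 ∧ j ≠ 2 * n - 1)).map
            (fun j => φ j * φb j)).prod)) := by
  classical
  set L : List ℕ := (idx (4 * n - 2)).filter (fun j => j ≠ n - 1 ∧ j ≠ 2 * n - 1) with hLdef
  show P (idx (4 * n - 3)) = del (delbar (P L))
  have memL : ∀ j, j ∈ L ↔ (1 ≤ j ∧ j ≤ 4 * n - 2 ∧ j ≠ n - 1 ∧ j ≠ 2 * n - 1) := by
    intro j
    rw [hLdef, List.mem_filter, mem_idx]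
    simp only [decide_eq_true_eq]
    tauto
  have hnodL : L.Nodup := (nodup_idx _).filter _
  have hmem : (4 * n - 2) ∈ L := by rw [memL]; omega
  have hLne : L ≠ [] := fun h => by rw [h] at hmem; exact List.not_mem_nil hmem
  set L' : List ℕ := L.erase (4 * n - 2) with hL'def
  have memL' : ∀ j, j ∈ L' ↔ (j ≠ 4 * n - 2 ∧ j ∈ L) := fun j => hnodL.mem_erase_iff
  have hnodL' : L'.Nodup := hnodL.erase _
  have hmem' : 2 * n ∈ L' := by rw [memL', memL]; omega
  have hL'ne : L' ≠ [] := fun h => by rw [h] at hmem'; exact List.not_mem_nil hmem'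
  have delφ : ∀ j y, del (φ j * y) = del (φ j) * y - φ j * del y :=
    fun j y => hleib (Finsupp.single (Sum.inl j) 1) y
  have delφb : ∀ j y, del (φb j * y) = del (φb j) * y - φb j * del y :=
    fun j y => hleib (Finsupp.single (Sum.inr j) 1) y
  -- Step 1: compute delbar (P L)
  have hvan : ∀ j ∈ L.toFinset, j ≠ 4 * n - 2 →
      dtau delbar j * (P (L.erase j) * 1) = 0 := by
    intro j hj hne
    rw [List.mem_toFinset, memL] at hj
    obtain ⟨h1, h2, h3, h4⟩ := hj
    rcases Nat.lt_or_ge j (3 * n - 1) with hc | hc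
    · rw [dtau, hdelbar0 j h1 hc, hdelbarb0 j h1 (by omega), zero_mul, mul_zero,
        sub_zero, zero_mul]
    · rcases Nat.eq_or_lt_of_le hc with hc' | hc'
      · -- j = 3n - 1
        have hj3 : j = 3 * n - 1 := hc'.symm
        subst hj3
        rw [dtau, hdelbar1, hdelbarb0 _ (by omega) (le_refl _), mul_zero, sub_zero]
        rw [mul_one, P_eq_G]
        simp only [phi_eq, phib_eq, mul_assoc]
        apply G3_zero₃
        simp only [List.mem_cons, inl_mem_gl, List.Nodup.mem_erase_iff hnodL, memL]
        right; right
        constructor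
        · omega
        · omega
      · -- 3n ≤ j ≤ 4n - 3
        have h3n : 3 * n ≤ j := by omega
        rw [dtau, hdelbar j h3n (by omega), hdelbarb j h3n (by omega), sub_mul]
        have hA : φ (j - 2 * n) * φb (j - n) * φb j * (P (L.erase j) * 1) = 0 := by
          rw [mul_one, P_eq_G]
          simp only [phi_eq, phib_eq, mul_assoc]
          apply G3_zero₃
          simp only [List.mem_cons, inl_mem_gl, List.Nodup.mem_erase_iff hnodL, memL]
          right; right
          exact ⟨by omega, by omega⟩
        have hB : φ j * (φb (j - 3 * n + 1) * φb (j - 2 * n + 1)) * (P (L.erase j) * 1) = 0 := by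
          rw [mul_one, P_eq_G]
          simp only [phi_eq, phib_eq, mul_assoc]
          apply G3_zero₂
          simp only [List.mem_cons, inr_mem_gl, List.Nodup.mem_erase_iff hnodL, memL]
          right
          exact ⟨by omega, by omega⟩
        rw [hA, hB, sub_self]
  have key1 : delbar (P L) = dtau delbar (4 * n - 2) * (P L' * 1) := by
    have e1 := D_P_mul delbar hleibb L hnodL 1
    rw [mul_one] at e1
    rw [e1, P_mul_D_one delbar hleibb L hLne, add_zero,
      Finset.sum_eq_single_of_mem _ (List.mem_toFinset.mpr hmem) hvan]
  -- expand dtau delbar (4n-2)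
  have hd1 : delbar (φ (4 * n - 2)) = φ (2 * n - 2) * φb (3 * n - 2) := by
    have := hdelbar (4 * n - 2) (by omega) (by omega)
    rw [show 4 * n - 2 - 2 * n = 2 * n - 2 by omega, show 4 * n - 2 - n = 3 * n - 2 by omega] at this
    exact this
  have hd2 : delbar (φb (4 * n - 2)) = φb (n - 1) * φb (2 * n - 1) := by
    have := hdelbarb (4 * n - 2) (by omega) (by omega)
    rw [show 4 * n - 2 - 3 * n + 1 = n - 1 by omega,
      show 4 * n - 2 - 2 * n + 1 = 2 * n - 1 by omega] at this
    exact this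
  have key2 : delbar (P L)
      = -(φ (4 * n - 2) * (φb (n - 1) * (φb (2 * n - 1) * G (gl L')))) := by
    rw [key1, dtau, hd1, hd2, sub_mul, mul_one, P_eq_G]
    have hA : φ (2 * n - 2) * φb (3 * n - 2) * φb (4 * n - 2) * G (gl L') = 0 := by
      simp only [phi_eq, phib_eq, mul_assoc]
      apply G3_zero₃
      simp only [List.mem_cons, inl_mem_gl, memL', memL]
      right; right
      exact ⟨by omega, by omega⟩
    rw [hA, zero_sub]
    simp only [phi_eq, phib_eq, mul_assoc]
  -- Step 2: compute del of it
  have hvan' : ∀ j ∈ L'.toFinset, dtau del j * (P (L'.erase j) * 1) = 0 := by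
    intro j hj
    rw [List.mem_toFinset, memL'] at hj
    obtain ⟨hne, hj⟩ := hj
    rw [memL] at hj
    obtain ⟨h1, h2, h3, h4⟩ := hj
    rcases Nat.lt_or_ge j (3 * n - 1) with hc | hc
    · rw [dtau, hdel0 j h1 (by omega), hdelb0 j h1 hc, zero_mul, mul_zero, sub_self, zero_mul]
    · rcases Nat.eq_or_lt_of_le hc with hc' | hc'
      · have hj3 : j = 3 * n - 1 := hc'.symm
        subst hj3
        rw [dtau, hdel0 _ (by omega) (le_refl _), hdelb1, zero_mul, zero_sub, neg_mul,
          neg_eq_zero, mul_one, P_eq_G]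
        simp only [phi_eq, phib_eq, mul_assoc]
        apply G3_zero₁
        simp only [inl_mem_gl, List.Nodup.mem_erase_iff hnodL', memL', memL]
        exact ⟨by omega, by omega, by omega⟩
      · have h3n : 3 * n ≤ j := by omega
        rw [dtau, hdel j h3n (by omega), hdelb j h3n (by omega), sub_mul]
        have hA : φ (j - 3 * n + 1) * φ (j - 2 * n + 1) * φb j * (P (L'.erase j) * 1) = 0 := by
          rw [mul_one, P_eq_G]
          simp only [phi_eq, phib_eq, mul_assoc]
          apply G3_zero₃
          simp only [List.mem_cons, inl_mem_gl, List.Nodup.mem_erase_iff hnodL', memL', memL]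
          right; right
          exact ⟨by omega, by omega, by omega⟩
        have hB : φ j * (φb (j - 2 * n) * φ (j - n)) * (P (L'.erase j) * 1) = 0 := by
          rw [mul_one, P_eq_G]
          simp only [phi_eq, phib_eq, mul_assoc]
          apply G3_zero₂
          simp only [List.mem_cons, inr_mem_gl, List.Nodup.mem_erase_iff hnodL', memL', memL]
          right
          exact ⟨by omega, by omega, by omega⟩
        rw [hA, hB, sub_self]
  have hdelG : del (G (gl L')) = 0 := by
    have e1 := D_P_mul del hleib L' hnodL' 1
    rw [mul_one] at e1
    rw [← P_eq_G, e1, P_mul_D_one del hleib L' hL'ne, add_zero]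
    exact Finset.sum_eq_zero hvan'
  have hdelZ : del (φb (2 * n - 1) * G (gl L')) = 0 := by
    rw [delφb, hdelG, mul_zero, sub_zero, hdelb0 (2 * n - 1) (by omega) (by omega), zero_mul]
  have hdelY : del (φb (n - 1) * (φb (2 * n - 1) * G (gl L'))) = 0 := by
    rw [delφb, hdelZ, mul_zero, sub_zero, hdelb0 (n - 1) (by omega) (by omega), zero_mul]
  have hd3 : del (φ (4 * n - 2)) = φ (n - 1) * φ (2 * n - 1) := by
    have := hdel (4 * n - 2) (by omega) (by omega)
    rw [show 4 * n - 2 - 3 * n + 1 = n - 1 by omega,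
      show 4 * n - 2 - 2 * n + 1 = 2 * n - 1 by omega] at this
    exact this
  have key3 : del (delbar (P L))
      = -(φ (n - 1) * φ (2 * n - 1)
          * (φb (n - 1) * (φb (2 * n - 1) * G (gl L')))) := by
    rw [key2, map_neg, delφ, hdelY, mul_zero, sub_zero, hd3]
  -- Step 3: identify with ψ
  rw [key3]
  have hswap : -(φ (n - 1) * φ (2 * n - 1) * (φb (n - 1) * (φb (2 * n - 1) * G (gl L'))))
      = P ((n - 1) :: (2 * n - 1) :: L') := by
    simp only [phi_eq, phib_eq, mul_assoc]
    rw [gen_swap (Sum.inl (2 * n - 1)) (Sum.inr (n - 1)), mul_neg, neg_neg]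
    rw [P_eq_G]
    rfl
  rw [hswap]
  have hnod2 : ((n - 1) :: (2 * n - 1) :: L').Nodup := by
    rw [List.nodup_cons, List.nodup_cons]
    refine ⟨?_, ?_, hnodL'⟩
    · simp only [List.mem_cons, memL', memL]
      omega
    · simp only [memL', memL]
      omega
  have hperm : ((n - 1) :: (2 * n - 1) :: L').Perm (idx (4 * n - 3)) := by
    rw [List.perm_ext_iff_of_nodup hnod2 (nodup_idx _)]
    intro a
    simp only [List.mem_cons, memL', memL, mem_idx]
    omega
  exact (P_perm hperm).symm

end
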